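/- Given a lifting pair (α,ρ) of a coupling ᾱ: B → Out_D(L), define on B ⊕ L the bracket [(b,l),(b',l')]_{α,ρ} = ([b,b'], [l,l'] + α(b)(l') − α(b')(l) + ρ(b,b')). This bracket is skew-symmetric, restricts to the given brackets on L and projects to the bracket on B, and it satisfies the Jacobi identity if and only if d_α ρ = 0. When d_α ρ = 0, (B ⊕ L, [·,·]_{α,ρ}) with anchor (b,l) ↦ a_B(b) is a Lie-Rinehart algebra extension of B by L inducing the coupling ᾱ. -/

import Mathlib

/-- The order-preserving inclusion `Fin (n-1) → Fin n` skipping the index `j`. -/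
def skipIdx {n : ℕ} (j : Fin n) (m : Fin (n - 1)) : Fin n :=
  if (m : ℕ) < (j : ℕ) then ⟨m, by have := m.isLt; omega⟩
  else ⟨(m : ℕ) + 1, by have := m.isLt; omega⟩

/-- The Chevalley–Eilenberg/de Rham differential of an `M`-valued `p`-form on a Lie
algebroid `B`, twisted by a connection `α : B → (M → M)`. -/
def dform {B M : Type*} [LieRing B] [AddCommGroup M]
    (α : B → M → M) (p : ℕ) (ξ : (Fin p → B) → M) :
    (Fin (p + 1) → B) → M :=
  fun s =>
    (∑ i : Fin (p + 1), ((-1 : ℤ) ^ (i : ℕ)) • α (s i) (ξ (s ∘ i.succAbove))) +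
      ∑ i : Fin (p + 1), ∑ j : Fin p,
        if (i : ℕ) ≤ (j : ℕ) then
          ((-1 : ℤ) ^ ((i : ℕ) + (j : ℕ) + 1)) •
            ξ (fun m : Fin p =>
              if hm : (m : ℕ) = 0 then ⁅s i, s (i.succAbove j)⁆
              else s (i.succAbove (skipIdx j ⟨(m : ℕ) - 1, by have := m.isLt; omega⟩)))
        else 0

theorem dform_two {B M : Type*} [LieRing B] [AddCommGroup M]
    (α : B → M → M) (ξ : (Fin 2 → B) → M) (s : Fin 3 → B) :
    dform α 2 ξ s =
      α (s 0) (ξ ![s 1, s 2]) - α (s 1) (ξ ![s 0, s 2]) + α (s 2) (ξ ![s 0, s 1])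
        - ξ ![⁅s 0, s 1⁆, s 2] + ξ ![⁅s 0, s 2⁆, s 1] - ξ ![⁅s 1, s 2⁆, s 0] := by
  have key : ∀ (f g : Fin 2 → B), f 0 = g 0 → f 1 = g 1 → ξ f = ξ g := by
    intro f g h0 h1
    congr 1
    funext m
    fin_cases m <;> assumption
  rw [dform]
  rw [Fin.sum_univ_three]
  rw [Fin.sum_univ_three]
  simp only [Fin.sum_univ_two]
  norm_num
  have e1 : ξ (fun m : Fin 2 => if h : m = 0 then ⁅s 0, s 1⁆
      else s (skipIdx (0 : Fin 2) ⟨(m : ℕ) - 1, by have := m.isLt; omega⟩).succ)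
      = ξ ![⁅s 0, s 1⁆, s 2] := key _ _ rfl (by simp [skipIdx])
  have e2 : ξ (fun m : Fin 2 => if h : m = 0 then ⁅s 0, s 2⁆
      else s (skipIdx (1 : Fin 2) ⟨(m : ℕ) - 1, by have := m.isLt; omega⟩).succ)
      = ξ ![⁅s 0, s 2⁆, s 1] := key _ _ rfl (by simp [skipIdx])
  have e3 : ξ (fun m : Fin 2 => if h : m = 0 then ⁅s 1, s 2⁆
      else s (Fin.succAbove 1 (skipIdx (1 : Fin 2) ⟨(m : ℕ) - 1, by have := m.isLt; omega⟩)))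
      = ξ ![⁅s 1, s 2⁆, s 0] := key _ _ rfl (by simp [skipIdx, Fin.succAbove])
  have e4 : ξ (s ∘ Fin.succ) = ξ ![s 1, s 2] := key _ _ rfl rfl
  have e5 : ξ (s ∘ Fin.succAbove 1) = ξ ![s 0, s 2] :=
    key _ _ (by simp [Fin.succAbove]) (by simp [Fin.succAbove])
  have e6 : ξ (s ∘ Fin.succAbove 2) = ξ ![s 0, s 1] :=
    key _ _ (by simp [Fin.succAbove]) (by simp [Fin.succAbove])
  rw [e1, e2, e3, e4, e5, e6]
  abel

/-- Given a lifting pair `(α, ρ)` of a coupling `ᾱ : B → Out_D(L)`,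
the bracket `[(b,l),(b',l')] = (⁅b,b'⁆, ⁅l,l'⁆ + α b l' − α b' l + ρ(b,b'))` on
`B ⊕ L` is skew-symmetric, restricts to the bracket of `L`, projects to the bracket
of `B`, and satisfies the Jacobi identity iff `d_α ρ = 0`.  When `d_α ρ = 0`, the
bracket makes `B ⊕ L` (with anchor `(b,l) ↦ a b`) a Lie–Rinehart algebra extension of
`B` by `L` inducing the coupling `ᾱ` (i.e. satisfying the Leibniz rule, and acting on
`L` through `α`). -/
theorem bracket_on_sum_extension
    {k : Type*} [Field k] {R : Type*} [CommRing R] [Algebra k R]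
    {B : Type*} [LieRing B] [LieAlgebra k B] [Module R B] [IsScalarTower k R B]
    {L : Type*} [LieRing L] [LieAlgebra k L] [LieAlgebra R L] [IsScalarTower k R L]
    (a : B →ₗ[R] Derivation k R R)
    (hLeibB : ∀ (s t : B) (f : R), ⁅s, f • t⁆ = f • ⁅s, t⁆ + a s f • t)
    (α : B → L →ₗ[k] L)
    (hadd : ∀ b b' : B, α (b + b') = α b + α b')
    (hsmul : ∀ (f : R) (b : B) (l : L), α (f • b) l = f • α b l)
    (hD : ∀ (b : B) (l l' : L), α b ⁅l, l'⁆ = ⁅α b l, l'⁆ + ⁅l, α b l'⁆)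
    (hLeibα : ∀ (b : B) (f : R) (l : L), α b (f • l) = f • α b l + a b f • l)
    (ρ : B [⋀^Fin 2]→ₗ[R] L)
    (hF : ∀ (b₁ b₂ : B) (l : L),
      α b₁ (α b₂ l) - α b₂ (α b₁ l) - α ⁅b₁, b₂⁆ l = ⁅ρ ![b₁, b₂], l⁆) :
    ∀ br : B × L → B × L → B × L,
      br = (fun x y =>
        (⁅x.1, y.1⁆, ⁅x.2, y.2⁆ + α x.1 y.2 - α y.1 x.2 + ρ ![x.1, y.1])) →
      -- skew-symmetry
      (∀ x y : B × L, br x y = - br y x) ∧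
      -- restricts to the bracket of `L`
      (∀ l l' : L, br (0, l) (0, l') = (0, ⁅l, l'⁆)) ∧
      -- projects to the bracket of `B`
      (∀ x y : B × L, (br x y).1 = ⁅x.1, y.1⁆) ∧
      -- acts on `L` through `α` (inducing the coupling `ᾱ`)
      (∀ (b : B) (l : L), br (b, 0) (0, l) = (0, α b l)) ∧
      -- Jacobi identity  ↔  `d_α ρ = 0`
      ((∀ x y z : B × L, br (br x y) z + br (br y z) x + br (br z x) y = 0) ↔
        (∀ s : Fin 3 → B, dform (fun b x => α b x) 2 ⇑ρ s = 0)) ∧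
      -- when `d_α ρ = 0`, the Leibniz rule holds w.r.t. the anchor `(b,l) ↦ a b`,
      -- so `(B ⊕ L, br)` is a Lie–Rinehart extension of `B` by `L`
      ((∀ s : Fin 3 → B, dform (fun b x => α b x) 2 ⇑ρ s = 0) →
        ∀ (x y : B × L) (f : R), br x (f • y) = f • br x y + a x.1 f • y) := by
  intro br hbr
  subst hbr
  -- helpers
  have hsk : ∀ u v : L, ⁅u, v⁆ = -⁅v, u⁆ := fun u v => (lie_skew u v).symm
  have hα0 : ∀ l : L, α 0 l = 0 := by
    intro l
    have h := hsmul (0 : R) 0 l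
    rwa [zero_smul, zero_smul] at h
  have hswap : ∀ c d : B, ρ ![c, d] = -ρ ![d, c] := by
    intro c d
    have h := ρ.map_swap (v := ![d, c]) (i := (0 : Fin 2)) (j := 1) (by decide)
    rw [show ![d, c] ∘ (Equiv.swap (0 : Fin 2) 1) = ![c, d] by
      funext m; fin_cases m <;> simp] at h
    rw [h]
  have hρneg : ∀ c d : B, ρ ![-c, d] = -ρ ![c, d] := by
    intro c d
    have h := ρ.map_update_neg ![c, d] 0 c
    rwa [show Function.update ![c, d] 0 (-c) = ![-c, d] by
        funext m; fin_cases m <;> simp,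
      show Function.update ![c, d] 0 c = ![c, d] by
        funext m; fin_cases m <;> simp] at h
  have hρsmul : ∀ (f : R) (c d : B), ρ ![c, f • d] = f • ρ ![c, d] := by
    intro f c d
    have h := ρ.map_update_smul ![c, d] 1 f d
    rwa [show Function.update ![c, d] 1 (f • d) = ![c, f • d] by
        funext m; fin_cases m <;> simp,
      show Function.update ![c, d] 1 d = ![c, d] by
        funext m; fin_cases m <;> simp] at h
  have hρ00 : ρ ![(0 : B), 0] = 0 := ρ.map_eq_zero_of_eq _ (i := 0) (j := 1) rfl (by decide)
  have hρb0 : ∀ b : B, ρ ![b, (0 : B)] = 0 := fun b => ρ.map_coord_zero 1 rfl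
  -- the key Jacobi computation
  have key : ∀ x y z : B × L,
      (fun x y : B × L =>
        (⁅x.1, y.1⁆, ⁅x.2, y.2⁆ + α x.1 y.2 - α y.1 x.2 + ρ ![x.1, y.1]))
        ((fun x y : B × L =>
        (⁅x.1, y.1⁆, ⁅x.2, y.2⁆ + α x.1 y.2 - α y.1 x.2 + ρ ![x.1, y.1])) x y) z +
      (fun x y : B × L =>
        (⁅x.1, y.1⁆, ⁅x.2, y.2⁆ + α x.1 y.2 - α y.1 x.2 + ρ ![x.1, y.1]))
        ((fun x y : B × L =>
        (⁅x.1, y.1⁆, ⁅x.2, y.2⁆ + α x.1 y.2 - α y.1 x.2 + ρ ![x.1, y.1])) y z) x +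
      (fun x y : B × L =>
        (⁅x.1, y.1⁆, ⁅x.2, y.2⁆ + α x.1 y.2 - α y.1 x.2 + ρ ![x.1, y.1]))
        ((fun x y : B × L =>
        (⁅x.1, y.1⁆, ⁅x.2, y.2⁆ + α x.1 y.2 - α y.1 x.2 + ρ ![x.1, y.1])) z x) y =
      (0, -(α x.1 (ρ ![y.1, z.1]) - α y.1 (ρ ![x.1, z.1]) + α z.1 (ρ ![x.1, y.1])
        - ρ ![⁅x.1, y.1⁆, z.1] + ρ ![⁅x.1, z.1⁆, y.1] - ρ ![⁅y.1, z.1⁆, x.1])) := by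
    rintro ⟨b1, l1⟩ ⟨b2, l2⟩ ⟨b3, l3⟩
    simp only [Prod.mk_add_mk, Prod.mk.injEq]
    have hskB : ∀ u v : B, ⁅u, v⁆ = -⁅v, u⁆ := fun u v => (lie_skew u v).symm
    constructor
    · have hj := lie_jacobi b1 b2 b3
      have h3 : ⁅b3, ⁅b1, b2⁆⁆ = -(⁅b1, ⁅b2, b3⁆⁆ + ⁅b2, ⁅b3, b1⁆⁆) :=
        eq_neg_of_add_eq_zero_right hj
      rw [hskB ⁅b1, b2⁆ b3, hskB ⁅b2, b3⁆ b1, hskB ⁅b3, b1⁆ b2, h3]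
      abel
    · -- L component
      have h12 : α ⁅b1, b2⁆ l3
          = α b1 (α b2 l3) - α b2 (α b1 l3) - ⁅ρ ![b1, b2], l3⁆ := by
        rw [← hF b1 b2 l3]; abel
      have h23 : α ⁅b2, b3⁆ l1
          = α b2 (α b3 l1) - α b3 (α b2 l1) - ⁅ρ ![b2, b3], l1⁆ := by
        rw [← hF b2 b3 l1]; abel
      have h31 : α ⁅b3, b1⁆ l2
          = α b3 (α b1 l2) - α b1 (α b3 l2) - ⁅ρ ![b3, b1], l2⁆ := by
        rw [← hF b3 b1 l2]; abel
      have hjac : ⁅⁅l1, l2⁆, l3⁆ = -⁅⁅l2, l3⁆, l1⁆ - ⁅⁅l3, l1⁆, l2⁆ := by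
        have hj := lie_jacobi l1 l2 l3
        have h3 : ⁅l3, ⁅l1, l2⁆⁆ = -(⁅l1, ⁅l2, l3⁆⁆ + ⁅l2, ⁅l3, l1⁆⁆) :=
          eq_neg_of_add_eq_zero_right hj
        rw [hsk ⁅l1, l2⁆ l3, hsk ⁅l2, l3⁆ l1, hsk ⁅l3, l1⁆ l2, h3]
        abel
      have hρ31 : ρ ![⁅b3, b1⁆, b2] = -ρ ![⁅b1, b3⁆, b2] := by
        rw [show ⁅b3, b1⁆ = -⁅b1, b3⁆ from hskB b3 b1, hρneg]
      simp only [add_lie, sub_lie, map_add, map_sub]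
      rw [hD b3 l1 l2, hD b1 l2 l3, hD b2 l3 l1, h12, h23, h31, hjac,
        hsk l1 (α b3 l2), hsk l2 (α b1 l3), hsk l3 (α b2 l1), hρ31,
        hswap b3 b1]
      simp only [map_neg, neg_lie, lie_neg]
      abel
  refine ⟨?_, ?_, ?_, ?_, ?_, ?_⟩
  · -- skew-symmetry
    rintro ⟨b1, l1⟩ ⟨b2, l2⟩
    have hskB : ∀ u v : B, ⁅u, v⁆ = -⁅v, u⁆ := fun u v => (lie_skew u v).symm
    simp only [Prod.neg_mk]
    refine Prod.ext (hskB b1 b2) ?_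
    simp only
    rw [hsk l1 l2, hswap b1 b2]
    abel
  · -- restricts to L
    intro l l'
    simp [hα0, hρ00]
  · -- projects to B
    intro x y; rfl
  · -- acts through α
    intro b l
    simp [hα0, hρb0]
  · -- Jacobi iff dρ = 0
    constructor
    · intro H s
      have h := (key (s 0, 0) (s 1, 0) (s 2, 0)).symm.trans (H (s 0, 0) (s 1, 0) (s 2, 0))
      rw [Prod.ext_iff] at h
      have h2 := h.2
      simp only [Prod.snd_zero, neg_eq_zero] at h2
      rw [dform_two]
      exact h2
    · intro H x y z
      rw [key x y z]
      have h := H ![x.1, y.1, z.1]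
      rw [dform_two] at h
      simp only [Matrix.cons_val_zero, Matrix.cons_val_one, Matrix.head_cons,
        Matrix.cons_val_two, Matrix.tail_cons] at h
      rw [h]
      simp
  · -- Leibniz rule
    intro _ x y f
    rcases x with ⟨b1, l1⟩
    rcases y with ⟨b2, l2⟩
    simp only [Prod.smul_mk, Prod.mk_add_mk, smul_add]
    refine Prod.ext ?_ ?_
    · simp only
      exact hLeibB b1 b2 f
    · simp only
      rw [lie_smul, hLeibα, hsmul, hρsmul]
      simp only [smul_add, smul_sub]
      abel
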